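/- arXiv:0902.3426 — 4 statements merged into one kernel-verified Lean document; each statement's English description precedes it below -/
import Mathlib

section
/- Let W be a finite-dimensional vector space over ℚ and let g be a ℚ-linear automorphism of W of finite order. Then det(g) = (−1)^{dim_ℚ W − dim_ℚ W^g}, where W^g = {w ∈ W : g(w) = w} is the subspace of g-fixed vectors. -/
open Multiset in
private lemma conj_pairing (S : Multiset ℂ)
    (h1 : S.map (starRingEnd ℂ) = S)
    (h2 : ∀ z ∈ S, (starRingEnd ℂ) z ≠ z) :
    ∃ T : Multiset ℂ, S = T + T.map (starRingEnd ℂ) := by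
  induction S using Multiset.strongInductionOn with
  | _ S ih =>
    rcases S.empty_or_exists_mem with hS | ⟨a, ha⟩
    · exact ⟨0, by simp [hS]⟩
    · have hinj : Function.Injective (starRingEnd ℂ) := (starRingEnd ℂ).injective
      have hca : (starRingEnd ℂ) a ∈ S := by
        rw [← h1]; exact Multiset.mem_map_of_mem _ ha
      have hne : (starRingEnd ℂ) a ≠ a := h2 a ha
      set S' := (S.erase a).erase ((starRingEnd ℂ) a) with hS'
      have hmem : (starRingEnd ℂ) a ∈ S.erase a := (Multiset.mem_erase_of_ne hne).mpr hca
      have hrec : S = a ::ₘ (starRingEnd ℂ) a ::ₘ S' := by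
        rw [hS', Multiset.cons_erase hmem, Multiset.cons_erase ha]
      have hlt : S' < S := lt_of_le_of_lt (Multiset.erase_le _ _) (Multiset.erase_lt.mpr ha)
      have h1' : S'.map (starRingEnd ℂ) = S' := by
        rw [hS', Multiset.map_erase _ hinj, Multiset.map_erase _ hinj, h1,
          Complex.conj_conj, Multiset.erase_comm]
      have h2' : ∀ z ∈ S', (starRingEnd ℂ) z ≠ z := fun z hz =>
        h2 z (Multiset.mem_of_mem_erase (Multiset.mem_of_mem_erase hz))
      obtain ⟨T, hT⟩ := ih S' hlt h1' h2'
      refine ⟨a ::ₘ T, ?_⟩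
      rw [hrec, hT, Multiset.map_cons, Multiset.cons_add, Multiset.add_cons]

open Polynomial Matrix

private lemma charpoly_eval_eq {ι : Type} [Fintype ι] [DecidableEq ι]
    (B : Matrix ι ι ℂ) (z : ℂ) :
    B.charpoly.eval z = (Matrix.scalar ι z - B).det := by
  rw [Matrix.charpoly, eval_det, Matrix.matPolyEquiv_charmatrix]
  simp

private lemma scalar_mulVec {ι : Type} [Fintype ι] [DecidableEq ι] (z : ℂ) (v : ι → ℂ) :
    Matrix.scalar ι z *ᵥ v = z • v := by
  ext i
  simp [Matrix.scalar, Matrix.mulVec_diagonal]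

private lemma det_eq_neg_one_pow_card {ι : Type} [Fintype ι] [DecidableEq ι]
    (A : Matrix ι ι ℚ) {n : ℕ} (hn : 0 < n) (hA : A ^ n = 1)
    (h1 : (A - 1).det ≠ 0) :
    A.det = (-1 : ℚ) ^ Fintype.card ι := by
  classical
  set f : ℚ →+* ℂ := algebraMap ℚ ℂ with hf
  set B : Matrix ι ι ℂ := f.mapMatrix A with hB
  have hBn : B ^ n = 1 := by rw [hB, ← map_pow, hA, _root_.map_one]
  set χ : ℂ[X] := B.charpoly with hχ
  have hmon : χ.Monic := B.charpoly_monic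
  have hsplit : χ.Splits := IsAlgClosed.splits χ
  set R : Multiset ℂ := χ.roots with hR
  have hdet : B.det = R.prod := Matrix.det_eq_prod_roots_charpoly B
  have hcard : Multiset.card R = Fintype.card ι := by
    rw [hR, (Polynomial.splits_iff_card_roots).mp hsplit, hχ,
      Matrix.charpoly_natDegree_eq_dim]
  -- each root gives an eigenvector
  have hroot : ∀ z ∈ R, ∃ v, v ≠ 0 ∧ B *ᵥ v = z • v := by
    intro z hz
    have hz0 : χ.eval z = 0 := Polynomial.isRoot_of_mem_roots hz
    rw [charpoly_eval_eq] at hz0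
    obtain ⟨v, hv0, hv⟩ := (Matrix.exists_mulVec_eq_zero_iff).mpr hz0
    refine ⟨v, hv0, ?_⟩
    have h' : Matrix.scalar ι z *ᵥ v - B *ᵥ v = 0 := by
      rw [← Matrix.sub_mulVec, hv]
    rw [scalar_mulVec] at h'
    exact (sub_eq_zero.mp h').symm
  -- each root is an n-th root of unity
  have hpow : ∀ z ∈ R, z ^ n = 1 := by
    intro z hz
    obtain ⟨v, hv0, hv⟩ := hroot z hz
    have hk : ∀ k : ℕ, (B ^ k) *ᵥ v = z ^ k • v := by
      intro k
      induction k with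
      | zero => simp
      | succ k ihk =>
          rw [pow_succ, ← Matrix.mulVec_mulVec, hv, Matrix.mulVec_smul, ihk,
            smul_smul, ← pow_succ']
    have := hk n
    rw [hBn, Matrix.one_mulVec] at this
    obtain ⟨i, hi⟩ := Function.ne_iff.mp hv0
    have hvi : v i = z ^ n * v i := congrFun this i
    have h2 : (z ^ n - 1) * v i = 0 := by rw [sub_mul, one_mul, ← hvi, sub_self]
    rcases mul_eq_zero.mp h2 with h | h
    · exact sub_eq_zero.mp h
    · exact absurd h hi
  -- 1 is not a root
  have hone : (1 : ℂ) ∉ R := by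
    intro hmem
    have hz0 : χ.eval 1 = 0 := Polynomial.isRoot_of_mem_roots hmem
    rw [charpoly_eval_eq] at hz0
    have hsc : Matrix.scalar ι (1 : ℂ) - B = f.mapMatrix (1 - A) := by
      rw [map_sub, _root_.map_one]
      congr 1
      ext i j
      simp [Matrix.scalar, Matrix.one_apply, Matrix.diagonal]
    rw [hsc, ← RingHom.map_det] at hz0
    have : (1 - A).det = 0 := by
      exact_mod_cast (map_eq_zero_iff f f.injective).mp hz0
    have hneg : (1 - A : Matrix ι ι ℚ) = -(A - 1) := (neg_sub A 1).symm
    rw [hneg, Matrix.det_neg] at this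
    rcases mul_eq_zero.mp this with h | h
    · exact absurd h (pow_ne_zero _ (by norm_num))
    · exact h1 h
  -- conjugation invariance of the multiset of roots
  have hconj : R.map (starRingEnd ℂ) = R := by
    have hmapχ : χ.map (starRingEnd ℂ) = χ := by
      rw [hχ, hB]
      rw [RingHom.mapMatrix_apply, Matrix.charpoly_map, Polynomial.map_map,
        show ((starRingEnd ℂ).comp f) = f from Subsingleton.elim _ _]
    conv_rhs => rw [hR, ← hmapχ]
    rw [hsplit.roots_map]
  -- every root has absolute value 1
  have habs : ∀ z ∈ R, ‖z‖ = 1 := by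
    intro z hz
    have h' : ‖z‖ ^ n = 1 := by
      rw [← norm_pow, hpow z hz]
      simp
    rcases (pow_eq_one_iff_of_ne_zero hn.ne').mp h' with h | ⟨h, -⟩
    · exact h
    · nlinarith [norm_nonneg z, h]
  -- split off the roots equal to -1
  set N := R.filter (fun z => z = -1) with hN
  set S := R.filter (fun z => ¬ z = -1) with hSdef
  have hsplitR : N + S = R := Multiset.filter_add_not _ _
  have hNrep : N = Multiset.replicate (Multiset.card N) (-1 : ℂ) := by
    apply Multiset.eq_replicate_of_mem
    intro b hb
    rw [hN] at hb
    exact (Multiset.mem_filter.mp hb).2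
  have hprodN : N.prod = (-1 : ℂ) ^ Multiset.card N := by
    conv_lhs => rw [hNrep]
    rw [Multiset.prod_replicate]
  have hq : ∀ z : ℂ, ((starRingEnd ℂ) z = -1) ↔ (z = -1) := by
    intro z
    constructor
    · intro h
      have := congrArg (starRingEnd ℂ) h
      simpa using this
    · intro h; simp [h]
  have hSconj : S.map (starRingEnd ℂ) = S := by
    conv_lhs => rw [hSdef]
    calc (Multiset.filter (fun z => ¬ z = -1) R).map (starRingEnd ℂ)
        = (Multiset.filter (fun z => ¬ z = -1) (R.map (starRingEnd ℂ))).map (starRingEnd ℂ) := by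
          rw [hconj]
      _ = ((Multiset.filter ((fun z => ¬ z = -1) ∘ (starRingEnd ℂ)) R).map
            (starRingEnd ℂ)).map (starRingEnd ℂ) := by rw [Multiset.filter_map]
      _ = (Multiset.filter ((fun z => ¬ z = -1) ∘ (starRingEnd ℂ)) R).map
            ((starRingEnd ℂ) ∘ (starRingEnd ℂ)) := by rw [Multiset.map_map]
      _ = (Multiset.filter (fun z => ¬ z = -1) R).map ((starRingEnd ℂ) ∘ (starRingEnd ℂ)) := by
            congr 1
            apply Multiset.filter_congr
            intro z _
            simp [Function.comp, hq z]
      _ = (Multiset.filter (fun z => ¬ z = -1) R).map id := by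
            congr 1
            funext z
            simp [Function.comp]
      _ = S := by rw [Multiset.map_id, hSdef]
  have hSne : ∀ z ∈ S, (starRingEnd ℂ) z ≠ z := by
    intro z hz heq
    rw [hSdef] at hz
    obtain ⟨hzR, hzne⟩ := Multiset.mem_filter.mp hz
    have hre : ((z.re : ℂ)) = z := (Complex.conj_eq_iff_re).mp heq
    have hpz : ((z.re : ℂ)) ^ n = 1 := by rw [hre]; exact hpow z hzR
    have hpz' : (z.re : ℝ) ^ n = 1 := by exact_mod_cast hpz
    rcases (pow_eq_one_iff_of_ne_zero hn.ne').mp hpz' with h | ⟨h, -⟩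
    · apply hone
      have : z = 1 := by rw [← hre, h, Complex.ofReal_one]
      rwa [← this]
    · apply hzne
      rw [← hre, h]
      norm_num
  obtain ⟨T, hT⟩ := conj_pairing S hSconj hSne
  have habsT : ‖T.prod‖ = 1 := by
    rw [show ‖T.prod‖ = normHom T.prod from rfl, map_multiset_prod]
    apply Multiset.prod_eq_one
    intro x hx
    obtain ⟨z, hz, rfl⟩ := Multiset.mem_map.mp hx
    have hzS : z ∈ S := by rw [hT]; exact Multiset.mem_add.mpr (Or.inl hz)
    rw [hSdef] at hzS
    exact habs z (Multiset.mem_filter.mp hzS).1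
  have hprodS : S.prod = 1 := by
    rw [hT, Multiset.prod_add, ← map_multiset_prod, Complex.mul_conj,
      Complex.normSq_eq_norm_sq, habsT, one_pow, Complex.ofReal_one]
  have hcardS : Even (Multiset.card S) := by
    rw [hT, Multiset.card_add, Multiset.card_map]
    exact ⟨Multiset.card T, rfl⟩
  have hprodR : R.prod = (-1 : ℂ) ^ Multiset.card N := by
    rw [← hsplitR, Multiset.prod_add, hprodN, hprodS, mul_one]
  have hcard2 : Fintype.card ι = Multiset.card N + Multiset.card S := by
    rw [← hcard, ← hsplitR, Multiset.card_add]
  have hsign : ((-1 : ℂ)) ^ Multiset.card N = (-1 : ℂ) ^ Fintype.card ι := by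
    rw [hcard2, pow_add, hcardS.neg_one_pow, mul_one]
  have hfinal : f A.det = f ((-1 : ℚ) ^ Fintype.card ι) := by
    calc f A.det = B.det := by rw [hB, RingHom.map_det]
      _ = R.prod := hdet
      _ = (-1 : ℂ) ^ Multiset.card N := hprodR
      _ = (-1 : ℂ) ^ Fintype.card ι := hsign
      _ = f ((-1 : ℚ) ^ Fintype.card ι) := by
            rw [map_pow, map_neg, _root_.map_one]
  exact f.injective hfinal


open Module Module.Free LinearMap Submodule


private lemma det_prodMap' {M₁ M₂ : Type*} [AddCommGroup M₁] [Module ℚ M₁]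
    [FiniteDimensional ℚ M₁] [AddCommGroup M₂] [Module ℚ M₂] [FiniteDimensional ℚ M₂]
    (f : M₁ →ₗ[ℚ] M₁) (g : M₂ →ₗ[ℚ] M₂) :
    LinearMap.det (f.prodMap g) = LinearMap.det f * LinearMap.det g := by
  let b₁ := chooseBasis ℚ M₁
  let b₂ := chooseBasis ℚ M₂
  rw [← LinearMap.det_toMatrix b₁ f, ← LinearMap.det_toMatrix b₂ g,
    ← LinearMap.det_toMatrix (b₁.prod b₂) (f.prodMap g),
    LinearMap.toMatrix_prodMap b₁ b₂ f g, Matrix.det_fromBlocks_zero₁₂]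


private lemma end_det_eq {U : Type*} [AddCommGroup U] [Module ℚ U] [FiniteDimensional ℚ U]
    (h : U →ₗ[ℚ] U) {n : ℕ} (hn : 0 < n) (hh : h ^ n = 1)
    (hker : LinearMap.det (h - LinearMap.id) ≠ 0) :
    LinearMap.det h = (-1 : ℚ) ^ Module.finrank ℚ U := by
  let b := Module.finBasis ℚ U
  have hAeq : LinearMap.toMatrix b b h = LinearMap.toMatrixAlgEquiv b h := rfl
  set A := LinearMap.toMatrixAlgEquiv b h with hA
  have hApow : A ^ n = 1 := by
    rw [hA, ← map_pow, hh, _root_.map_one]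
  have hAsub : (A - 1 : Matrix _ _ ℚ).det ≠ 0 := by
    rw [← LinearMap.det_toMatrix b] at hker
    rwa [map_sub, LinearMap.toMatrix_id, hAeq] at hker
  have := det_eq_neg_one_pow_card A hn hApow hAsub
  rw [← LinearMap.det_toMatrix b h, hAeq, this, Fintype.card_fin]





/-- If `W` is a finite-dimensional vector space over `ℚ` and `g` is a `ℚ`-linear
automorphism of `W` of finite order, then
`det g = (-1) ^ (dim W - dim W^g)`, where `W^g` is the subspace of `g`-fixed vectors
(realized as the kernel of `g - id`). -/
theorem det_eq_neg_one_pow_of_finOrder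
    (W : Type*) [AddCommGroup W] [Module ℚ W] [FiniteDimensional ℚ W]
    (g : W ≃ₗ[ℚ] W) (hg : IsOfFinOrder g) :
    LinearMap.det (g : W →ₗ[ℚ] W) =
      (-1 : ℚ) ^ (Module.finrank ℚ W -
        Module.finrank ℚ (LinearMap.ker ((g : W →ₗ[ℚ] W) - LinearMap.id))) := by
  classical
  set φ : W →ₗ[ℚ] W := (g : W →ₗ[ℚ] W) with hφ
  set n := orderOf g with hn'
  have hn : 0 < n := hg.orderOf_pos
  have hgn : g ^ n = 1 := pow_orderOf_eq_one g
  have hφn : φ ^ n = 1 := by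
    have hcoe : ∀ k : ℕ, ((g ^ k : W ≃ₗ[ℚ] W) : W →ₗ[ℚ] W) = φ ^ k := by
      intro k
      induction k with
      | zero => rfl
      | succ m ihm =>
        rw [pow_succ, pow_succ, ← ihm]
        rfl
    rw [← hcoe n, hgn]
    rfl
  set V := LinearMap.ker (φ - LinearMap.id) with hV
  set Ur := LinearMap.range (φ - LinearMap.id) with hUr
  have hmemV : ∀ x, x ∈ V ↔ φ x = x := by
    intro x
    rw [hV, LinearMap.mem_ker, LinearMap.sub_apply, LinearMap.id_apply, sub_eq_zero]
  have hVinv : ∀ x ∈ V, φ x ∈ V := by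
    intro x hx
    rw [hmemV] at hx ⊢
    exact congrArg φ hx
  have hUinv : ∀ x ∈ Ur, φ x ∈ Ur := by
    rintro x ⟨y, rfl⟩
    exact ⟨φ y, by simp only [LinearMap.sub_apply, LinearMap.id_apply, map_sub]⟩
  have hdisj : Disjoint V Ur := by
    rw [Submodule.disjoint_def]
    intro x hxV hxU
    obtain ⟨y, hy⟩ := hxU
    have hgeom : (∑ i ∈ Finset.range n, φ ^ i) * (φ - 1) = φ ^ n - 1 := geom_sum_mul φ n
    have hzero : (∑ i ∈ Finset.range n, φ ^ i) x = 0 := by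
      have h1 : (φ - LinearMap.id) = (φ - 1) := rfl
      rw [← hy, h1, ← Module.End.mul_apply, hgeom, hφn, sub_self, LinearMap.zero_apply]
    have hsum : (∑ i ∈ Finset.range n, φ ^ i) x = (n : ℚ) • x := by
      rw [LinearMap.sum_apply]
      have : ∀ i : ℕ, (φ ^ i) x = x := by
        intro i
        rw [Module.End.pow_apply]
        exact Function.iterate_fixed ((hmemV x).mp hxV) i
      simp only [this, Finset.sum_const, Finset.card_range]
      rw [Nat.cast_smul_eq_nsmul]
    rw [hsum] at hzero
    have hn0 : (n : ℚ) ≠ 0 := Nat.cast_ne_zero.mpr hn.ne'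
    exact (smul_eq_zero.mp hzero).resolve_left hn0
  have hrank := LinearMap.finrank_range_add_finrank_ker (φ - LinearMap.id)
  rw [← hV, ← hUr] at hrank
  have hcompl : IsCompl V Ur := by
    refine ⟨hdisj, codisjoint_iff.mpr ?_⟩
    apply Submodule.eq_top_of_finrank_eq
    have h2 := Submodule.finrank_sup_add_finrank_inf_eq V Ur
    rw [hdisj.eq_bot, finrank_bot] at h2
    omega
  let e := Submodule.prodEquivOfIsCompl V Ur hcompl
  let F := φ.restrict hVinv
  let G := φ.restrict hUinv
  let ψ := F.prodMap G
  have hψ : ψ = e.symm.conj φ := by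
    let bV := chooseBasis ℚ V
    let bU := chooseBasis ℚ Ur
    let b := bV.prod bU
    apply b.ext
    simp only [Basis.prod_apply, coe_inl, coe_inr, prodMap_apply, LinearEquiv.conj_apply,
      LinearEquiv.symm_symm, Submodule.coe_prodEquivOfIsCompl, coe_comp, LinearEquiv.coe_coe,
      Function.comp_apply, coprod_apply, Submodule.coe_subtype, map_add, Sum.forall, Sum.elim_inl,
      map_zero, ZeroMemClass.coe_zero, add_zero, LinearEquiv.eq_symm_apply, and_self,
      Submodule.coe_prodEquivOfIsCompl', restrict_coe_apply, implies_true, Sum.elim_inr, zero_add,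
      e, V, ψ, F, G, b]
  have hdet : LinearMap.det φ = LinearMap.det F * LinearMap.det G := by
    rw [← det_prodMap' F G]
    show LinearMap.det φ = LinearMap.det ψ
    rw [hψ, LinearEquiv.conj_apply, LinearMap.comp_assoc, LinearMap.det_conj]
  have hF : F = LinearMap.id := by
    ext x
    exact (hmemV x.1).mp x.2
  have hGn : G ^ n = 1 := by
    rw [Module.End.pow_restrict]
    ext x
    simp [hφn]
  have hGker : LinearMap.det (G - LinearMap.id) ≠ 0 := by
    intro h0
    have hlt := LinearMap.bot_lt_ker_of_det_eq_zero h0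
    obtain ⟨x, hxker, hx0⟩ := (Submodule.ne_bot_iff _).mp (ne_of_gt hlt)
    have hfix : φ x.1 = x.1 := by
      have : G x = x := by
        have := LinearMap.mem_ker.mp hxker
        rw [LinearMap.sub_apply, LinearMap.id_apply, sub_eq_zero] at this
        exact this
      have := congrArg (Subtype.val) this
      rwa [LinearMap.restrict_coe_apply] at this
    have hxV : x.1 ∈ V := (hmemV x.1).mpr hfix
    have : x.1 = 0 := (Submodule.disjoint_def.mp hdisj) x.1 hxV x.2
    exact hx0 (Subtype.ext this)
  have hdetG := end_det_eq G hn hGn hGker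
  rw [hφ] at hdet ⊢
  rw [hdet, hF, LinearMap.det_id, one_mul, hdetG]
  congr 1
  omega
end

section
/- Let G be a finite cyclic group. Any two finite-dimensional representations of G over ℚ that are both irreducible and faithful are isomorphic. In other words, up to isomorphism there is at most one faithful irreducible finite-dimensional ℚ-representation of G. -/
/-- A subspace `U` is invariant under a representation `ρ` if it is stable under the
action of every group element. -/
def RepInvariant {k G V : Type*} [CommSemiring k] [Monoid G] [AddCommMonoid V]
    [Module k V] (ρ : Representation k G V) (U : Submodule k V) : Prop :=
  ∀ g : G, ∀ v ∈ U, ρ g v ∈ U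

/-- A representation is irreducible if the space is nonzero and its only invariant
subspaces are `⊥` and `⊤`. -/
def RepIrreducible {k G V : Type*} [CommSemiring k] [Monoid G] [AddCommMonoid V]
    [Module k V] (ρ : Representation k G V) : Prop :=
  Nontrivial V ∧ ∀ U : Submodule k V, RepInvariant ρ U → U = ⊥ ∨ U = ⊤

open Polynomial Module

section Aux

variable {G : Type*} [Group G] [Finite G]
variable {V : Type*} [AddCommGroup V] [Module ℚ V] [FiniteDimensional ℚ V]

theorem aux_simple (ρ : Representation ℚ G V) (g : G)
    (hg : ∀ x : G, x ∈ Subgroup.zpowers g) (hirr : RepIrreducible ρ) :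
    IsSimpleModule (Polynomial ℚ) (Module.AEval' (ρ g)) := by
  obtain ⟨hnt, hU⟩ := hirr
  set A : Module.End ℚ V := ρ g with hA
  have hAinv : ∀ (k : ℕ) (U : Submodule (Polynomial ℚ) (Module.AEval' A)) (v : V),
      Module.AEval'.of A v ∈ U → Module.AEval'.of A ((A ^ k) v) ∈ U := by
    intro k U
    induction k with
    | zero => intro v hv; simpa using hv
    | succ k ih =>
      intro v hv
      have h2 := U.smul_mem (X : Polynomial ℚ) (ih v hv)
      rw [Module.AEval'.X_smul_of] at h2
      simpa [pow_succ', Module.End.mul_apply] using h2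
  have hnt' : Nontrivial (Module.AEval' A) := (Module.AEval'.of A).toEquiv.symm.nontrivial
  refine { toIsSimpleOrder := ⟨?_⟩ }
  intro U
  set p : Submodule ℚ V :=
    (U.restrictScalars ℚ).comap ((Module.AEval'.of A : V ≃ₗ[ℚ] Module.AEval' A) : V →ₗ[ℚ] Module.AEval' A) with hp
  have hmem : ∀ v : V, v ∈ p ↔ Module.AEval'.of A v ∈ U := fun v => Iff.rfl
  have hinv : RepInvariant ρ p := by
    intro h v hv
    obtain ⟨k, rfl⟩ :=
      (isOfFinOrder_of_finite g).mem_powers_iff_mem_zpowers.mpr (hg h)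
    rw [hmem] at hv ⊢
    have hrw : ρ (g ^ k) = A ^ k := by rw [map_pow, hA]
    rw [hrw]
    exact hAinv k U v hv
  rcases hU p hinv with h | h
  · left
    rw [Submodule.eq_bot_iff] at h ⊢
    intro x hx
    have h1 : (Module.AEval'.of A).symm x ∈ p := by
      rw [hmem, LinearEquiv.apply_symm_apply]; exact hx
    have h2 := h _ h1
    rw [← (Module.AEval'.of A).apply_symm_apply x, h2, map_zero]
  · right
    rw [Submodule.eq_top_iff'] at h ⊢
    intro x
    have h1 : (Module.AEval'.of A).symm x ∈ p := h _
    rw [hmem, LinearEquiv.apply_symm_apply] at h1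
    exact h1

theorem aux_equiv (ρ : Representation ℚ G V) (g : G)
    (hg : ∀ x : G, x ∈ Subgroup.zpowers g) (hirr : RepIrreducible ρ)
    (hf : Function.Injective ρ) :
    Nonempty (Module.AEval' (ρ g) ≃ₗ[Polynomial ℚ]
      (Polynomial ℚ) ⧸ Ideal.span {cyclotomic (Nat.card G) ℚ}) := by
  have hsimple := aux_simple ρ g hg hirr
  set A : Module.End ℚ V := ρ g with hA
  have hint : IsIntegral ℚ A := Algebra.IsIntegral.isIntegral A
  have h0 : minpoly ℚ A ≠ 0 := minpoly.ne_zero hint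
  have hn : 0 < Nat.card G := Nat.card_pos
  have hann : Module.annihilator (Polynomial ℚ) (Module.AEval' A)
      = Ideal.span {minpoly ℚ A} := by
    rw [Module.AEval.annihilator_eq_ker_aeval, minpoly.ker_aeval_eq_span_minpoly]
  have hmax : (Ideal.span {minpoly ℚ A}).IsMaximal :=
    hann ▸ IsSimpleModule.annihilator_isMaximal
  have hprime : Prime (minpoly ℚ A) := (Ideal.span_singleton_prime h0).mp hmax.isPrime
  have hgn : g ^ Nat.card G = 1 := pow_card_eq_one'
  have hAn : A ^ Nat.card G = 1 := by rw [hA, ← map_pow, hgn, map_one]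
  have hdvd : minpoly ℚ A ∣ X ^ Nat.card G - 1 :=
    minpoly.dvd ℚ A (by simp [hAn])
  rw [← prod_cyclotomic_eq_X_pow_sub_one hn ℚ] at hdvd
  obtain ⟨d, hd, hdvd⟩ := hprime.exists_mem_finset_dvd hdvd
  rw [Nat.mem_divisors] at hd
  have hdpos : 0 < d := Nat.pos_of_dvd_of_pos hd.1 hn
  have heq : minpoly ℚ A = cyclotomic d ℚ :=
    eq_of_monic_of_associated (minpoly.monic hint) (cyclotomic.monic d ℚ)
      (hprime.irreducible.associated_of_dvd (cyclotomic.irreducible_rat hdpos) hdvd)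
  have hAd : A ^ d = 1 := by
    have hdvd2 : minpoly ℚ A ∣ X ^ d - 1 := by
      rw [heq]; exact cyclotomic.dvd_X_pow_sub_one d ℚ
    have h3 : Polynomial.aeval A ((X : Polynomial ℚ) ^ d - 1) = 0 :=
      minpoly.dvd_iff.mp hdvd2
    have h4 : A ^ d - 1 = 0 := by simpa using h3
    rwa [sub_eq_zero] at h4
  have hgd : g ^ d = 1 := by
    apply hf
    rw [map_pow, map_one, ← hA, hAd]
  have hnd : Nat.card G ∣ d := by
    rw [← orderOf_eq_card_of_forall_mem_zpowers hg]
    exact orderOf_dvd_of_pow_eq_one hgd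
  have hdn : d = Nat.card G := Nat.dvd_antisymm hd.1 hnd
  obtain ⟨I, hI, ⟨e⟩⟩ := isSimpleModule_iff_quot_maximal.mp hsimple
  have hIeq : I = Ideal.span {cyclotomic (Nat.card G) ℚ} := by
    rw [← Ideal.annihilator_quotient (I := I), ← e.annihilator_eq, hann, heq, hdn]
  exact ⟨e.trans (Submodule.quotEquivOfEq _ _ hIeq)⟩

end Aux

/-- Any two finite-dimensional representations of a finite cyclic group over `ℚ` that are
both irreducible and faithful are isomorphic. -/
theorem faithful_irreducible_rat_rep_of_cyclic_unique
    (G : Type*) [Group G] [Finite G] [IsCyclic G]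
    (V W : Type*) [AddCommGroup V] [Module ℚ V] [FiniteDimensional ℚ V]
    [AddCommGroup W] [Module ℚ W] [FiniteDimensional ℚ W]
    (ρ : Representation ℚ G V) (σ : Representation ℚ G W)
    (hρirr : RepIrreducible ρ) (hσirr : RepIrreducible σ)
    (hρf : Function.Injective ρ) (hσf : Function.Injective σ) :
    ∃ e : V ≃ₗ[ℚ] W, ∀ (g : G) (v : V), e (ρ g v) = σ g (e v) := by
  obtain ⟨g, hg⟩ := IsCyclic.exists_generator (α := G)
  obtain ⟨eV⟩ := aux_equiv ρ g hg hρirr hρf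
  obtain ⟨eW⟩ := aux_equiv σ g hg hσirr hσf
  set E : Module.AEval' (ρ g) ≃ₗ[Polynomial ℚ] Module.AEval' (σ g) := eV.trans eW.symm
  set e : V ≃ₗ[ℚ] W :=
    (Module.AEval'.of (ρ g)).trans
      ((E.restrictScalars ℚ).trans (Module.AEval'.of (σ g)).symm) with he
  refine ⟨e, ?_⟩
  have key : ∀ v : V, e (ρ g v) = σ g (e v) := by
    intro v
    show (Module.AEval'.of (σ g)).symm (E (Module.AEval'.of (ρ g) (ρ g v)))
      = σ g ((Module.AEval'.of (σ g)).symm (E (Module.AEval'.of (ρ g) v)))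
    rw [← Module.AEval'.X_smul_of, map_smul, Module.AEval'.of_symm_X_smul]
  have keyk : ∀ (k : ℕ) (v : V), e ((ρ g ^ k) v) = ((σ g) ^ k) (e v) := by
    intro k
    induction k with
    | zero => intro v; simp
    | succ k ih =>
      intro v
      rw [pow_succ', pow_succ', Module.End.mul_apply, Module.End.mul_apply, key, ih]
  intro h v
  obtain ⟨k, rfl⟩ := (isOfFinOrder_of_finite g).mem_powers_iff_mem_zpowers.mpr (hg h)
  rw [map_pow, map_pow]
  exact keyk k v
end

section
/- Let G be a Hausdorff topological group and p a prime. Suppose u, z ∈ G commute, z has finite order coprime to p, and both u and u·z are topologically unipotent. Then z = 1 (and hence u·z = u). Consequently, two topologically unipotent elements that differ by a commuting element of finite order coprime to p are equal. -/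
open Filter Topology

/-- Let `G` be a Hausdorff topological group and `p` a prime. If `u` and `z` commute,
`z` has finite order coprime to `p`, and both `u` and `u * z` are topologically unipotent
(i.e. their `p ^ n`-th powers tend to `1`), then `z = 1` (and hence `u * z = u`). -/
theorem eq_one_of_commute_topologically_unipotent
    (G : Type*) [Group G] [TopologicalSpace G] [IsTopologicalGroup G] [T2Space G]
    (p : ℕ) (hp : p.Prime) (u z : G) (huz : Commute u z)
    (hz : IsOfFinOrder z) (hcop : Nat.Coprime (orderOf z) p)
    (hu : Tendsto (fun n : ℕ => u ^ (p ^ n)) atTop (𝓝 1))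
    (huz' : Tendsto (fun n : ℕ => (u * z) ^ (p ^ n)) atTop (𝓝 1)) :
    z = 1 ∧ u * z = u := by
  have hm : 0 < orderOf z := hz.orderOf_pos
  set m := orderOf z with hmdef
  -- z ^ (p ^ n) tends to 1
  have hzt : Tendsto (fun n : ℕ => z ^ (p ^ n)) atTop (𝓝 1) := by
    have : (fun n : ℕ => z ^ (p ^ n)) =
        fun n : ℕ => (u ^ (p ^ n))⁻¹ * (u * z) ^ (p ^ n) := by
      funext n
      rw [huz.mul_pow, inv_mul_cancel_left]
    rw [this]
    have := (hu.inv).mul huz'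
    simpa using this
  have hφ : 0 < m.totient := Nat.totient_pos.mpr hm
  -- along the subsequence n = k * totient m, z ^ (p ^ n) = z
  have hconst : ∀ k : ℕ, z ^ (p ^ (k * m.totient)) = z := by
    intro k
    have h1 : p ^ m.totient ≡ 1 [MOD m] := Nat.ModEq.pow_totient hcop.symm
    have h2 : p ^ (k * m.totient) ≡ 1 [MOD m] := by
      calc p ^ (k * m.totient) = (p ^ m.totient) ^ k := by rw [mul_comm, pow_mul]
        _ ≡ 1 ^ k [MOD m] := h1.pow k
        _ = 1 := one_pow k
    have := (pow_eq_pow_iff_modEq (x := z) (n := p ^ (k * m.totient)) (m := 1)).mpr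
      (by simpa [hmdef] using h2)
    simpa using this
  have hsub : Tendsto (fun k : ℕ => z ^ (p ^ (k * m.totient))) atTop (𝓝 1) := by
    apply hzt.comp
    exact tendsto_atTop_mono (fun k => Nat.le_mul_of_pos_right k hφ) tendsto_id
  have hz1 : z = 1 := by
    have : Tendsto (fun _ : ℕ => z) atTop (𝓝 1) := by
      simpa [hconst] using hsub
    exact tendsto_nhds_unique tendsto_const_nhds this
  exact ⟨hz1, by rw [hz1, mul_one]⟩
end

section
/- Let G be a Hausdorff topological group and p a prime. Suppose s₁·u₁ = s₂·u₂ in G, where s₁ and s₂ have finite order coprime to p, u₁ and u₂ are topologically unipotent, and the four elements s₁, s₂, u₁, u₂ pairwise commute. Then s₁ = s₂ and u₁ = u₂. -/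
open Filter Topology

/-- Uniqueness of the topological Jordan decomposition: in a Hausdorff topological group,
if `s₁ * u₁ = s₂ * u₂` where `s₁, s₂` have finite order coprime to the prime `p`,
`u₁, u₂` are topologically unipotent (their `p ^ n`-th powers tend to `1`), and the four
elements pairwise commute, then `s₁ = s₂` and `u₁ = u₂`. -/
theorem topological_jordan_decomposition_unique
    (G : Type*) [Group G] [TopologicalSpace G] [IsTopologicalGroup G] [T2Space G]
    (p : ℕ) (hp : p.Prime) (s₁ s₂ u₁ u₂ : G)
    (heq : s₁ * u₁ = s₂ * u₂)
    (hs₁ : IsOfFinOrder s₁) (hs₂ : IsOfFinOrder s₂)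
    (hcop₁ : Nat.Coprime (orderOf s₁) p) (hcop₂ : Nat.Coprime (orderOf s₂) p)
    (hu₁ : Tendsto (fun n : ℕ => u₁ ^ (p ^ n)) atTop (𝓝 1))
    (hu₂ : Tendsto (fun n : ℕ => u₂ ^ (p ^ n)) atTop (𝓝 1))
    (h₁₂ : Commute s₁ s₂) (h₁u₁ : Commute s₁ u₁) (h₁u₂ : Commute s₁ u₂)
    (h₂u₁ : Commute s₂ u₁) (h₂u₂ : Commute s₂ u₂) (hu₁u₂ : Commute u₁ u₂) :
    s₁ = s₂ ∧ u₁ = u₂ := by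
  -- Let t := s₂⁻¹ * s₁ = u₂ * u₁⁻¹
  set t : G := s₂⁻¹ * s₁ with ht
  have htu : t = u₂ * u₁⁻¹ := by
    rw [ht, inv_mul_eq_iff_eq_mul, ← mul_assoc, eq_mul_inv_iff_mul_eq]
    exact heq
  -- t has order coprime to p
  have hcomm : Commute s₂⁻¹ s₁ := (h₁₂.symm.inv_left)
  have hdvd : orderOf t ∣ Nat.lcm (orderOf s₂⁻¹) (orderOf s₁) := hcomm.orderOf_mul_dvd_lcm
  rw [orderOf_inv] at hdvd
  have hcop : Nat.Coprime (orderOf t) p := by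
    have h1 : Nat.Coprime (orderOf s₂ * orderOf s₁) p := hcop₂.mul hcop₁
    exact Nat.Coprime.coprime_dvd_left (hdvd.trans (Nat.lcm_dvd_mul _ _)) h1
  set m := orderOf t with hm
  have hmpos : 0 < m := by
    rcases Nat.eq_zero_or_pos m with h | h
    · exfalso
      rw [h] at hcop
      exact hp.one_lt.ne' (Nat.coprime_zero_left p |>.mp hcop)
    · exact h
  -- Euler: p ^ totient m ≡ 1 mod m
  have heuler : p ^ m.totient ≡ 1 [MOD m] := Nat.ModEq.pow_totient hcop.symm
  set k := m.totient with hk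
  have hkpos : 0 < k := Nat.totient_pos.mpr hmpos
  -- t = t ^ (p ^ (k * j)) for all j
  have hconst : ∀ j : ℕ, t ^ (p ^ (k * j)) = t := by
    intro j
    have : p ^ (k * j) ≡ 1 [MOD m] := by
      rw [pow_mul]
      calc (p ^ k) ^ j ≡ 1 ^ j [MOD m] := heuler.pow j
        _ = 1 := one_pow j
    calc t ^ (p ^ (k * j)) = t ^ (p ^ (k * j) % m) := (pow_mod_orderOf t _).symm
      _ = t ^ (1 % m) := by rw [Nat.ModEq] at this; rw [this]
      _ = t ^ (1 : ℕ) := pow_mod_orderOf t 1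
      _ = t := pow_one t
  -- t ^ (p ^ n) → 1
  have htend : Tendsto (fun n : ℕ => t ^ (p ^ n)) atTop (𝓝 1) := by
    have : ∀ n : ℕ, t ^ (p ^ n) = u₂ ^ (p ^ n) * (u₁ ^ (p ^ n))⁻¹ := by
      intro n
      rw [htu, (hu₁u₂.symm.inv_right).mul_pow, inv_pow]
    simp only [this]
    have := hu₂.mul hu₁.inv
    simpa using this
  -- subsequence: constant t tends to 1
  have hsub : Tendsto (fun j : ℕ => t ^ (p ^ (k * j))) atTop (𝓝 1) :=
    htend.comp (tendsto_atTop_atTop_of_monotone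
      (fun a b hab => Nat.mul_le_mul_left k hab)
      (fun n => ⟨n, Nat.le_mul_of_pos_left n hkpos⟩))
  have ht1 : t = 1 := by
    have : Tendsto (fun _ : ℕ => t) atTop (𝓝 1) := by
      simpa only [hconst] using hsub
    exact (tendsto_nhds_unique this tendsto_const_nhds).symm
  have hs : s₁ = s₂ := by
    have := ht1
    rw [ht] at this
    exact (inv_mul_eq_one.mp this).symm
  have hu : u₁ = u₂ := by
    have := ht1
    rw [htu] at this
    have := mul_inv_eq_one.mp this
    exact this.symm
  exact ⟨hs, hu⟩
end
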